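/- arXiv:2512.18083 — 3 statements merged into one kernel-verified Lean document; each statement's English description precedes it below -/
import Mathlib

section
/- Under overlap and ignorability, the inverse-probability-weighted identity holds: E[ Z·Y / e(X) ] = E[Y(1)], where e(X) = P(Z=1|X). -/
open scoped Classical
open Finset

noncomputable def pr {Ω : Type*} [Fintype Ω] (P : Ω → ℝ) (A : Ω → Prop) : ℝ :=
  ∑ ω, if A ω then P ω else 0

noncomputable def expec {Ω : Type*} [Fintype Ω] (P : Ω → ℝ) (f : Ω → ℝ) : ℝ :=
  ∑ ω, P ω * f ω

noncomputable def cexp {Ω : Type*} [Fintype Ω] (P : Ω → ℝ) (f : Ω → ℝ) (A : Ω → Prop) : ℝ :=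
  (∑ ω, if A ω then P ω * f ω else 0) / pr P A

set_option maxHeartbeats 1000000 in
/-- Under overlap and ignorability, E[Z·Y/e(X)] = E[Y(1)]. -/
theorem ipw_identity_treated {Ω 𝒳 : Type*} [Fintype Ω] [Fintype 𝒳]
    (P : Ω → ℝ) (hP : ∀ ω, 0 ≤ P ω) (hP1 : ∑ ω, P ω = 1)
    (X : Ω → 𝒳) (Z : Ω → ℝ) (Y1 Y0 Y : Ω → ℝ)
    (hZ : ∀ ω, Z ω = 0 ∨ Z ω = 1)
    (consistency : ∀ ω, Y ω = Z ω * Y1 ω + (1 - Z ω) * Y0 ω)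
    (e : 𝒳 → ℝ)
    (he : ∀ x, e x = pr P (fun ω => Z ω = 1 ∧ X ω = x) / pr P (fun ω => X ω = x))
    (overlap : ∀ x : 𝒳, 0 < pr P (fun ω => X ω = x) → 0 < e x)
    (ignorability : ∀ (x : 𝒳) (z y1 y0 : ℝ),
      pr P (fun ω => Y1 ω = y1 ∧ Y0 ω = y0 ∧ Z ω = z ∧ X ω = x) * pr P (fun ω => X ω = x)
        = pr P (fun ω => Y1 ω = y1 ∧ Y0 ω = y0 ∧ X ω = x)
            * pr P (fun ω => Z ω = z ∧ X ω = x)) :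
    expec P (fun ω => Z ω * Y ω / e (X ω)) = expec P Y1 := by
  classical
  have collapse : ∀ Q : Ω → Prop,
      ∑ p ∈ (Finset.univ.image Y1) ×ˢ (Finset.univ.image Y0),
        p.1 * pr P (fun ω => Y1 ω = p.1 ∧ Y0 ω = p.2 ∧ Q ω)
      = ∑ ω, if Q ω then P ω * Y1 ω else 0 := by
    intro Q
    unfold pr
    simp_rw [Finset.mul_sum]
    rw [Finset.sum_comm]
    refine Finset.sum_congr rfl fun ω _ => ?_
    rw [Finset.sum_eq_single (Y1 ω, Y0 ω)]
    · by_cases hq : Q ω <;> simp [hq, mul_comm]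
    · intro b hb hne
      have hfalse : ¬ (Y1 ω = b.1 ∧ Y0 ω = b.2 ∧ Q ω) := by
        rintro ⟨h1, h2, _⟩
        exact hne (Prod.ext_iff.2 ⟨h1.symm, h2.symm⟩)
      simp [hfalse]
    · intro h
      exact absurd (by simp : (Y1 ω, Y0 ω) ∈
        (Finset.univ.image Y1) ×ˢ (Finset.univ.image Y0)) h
  have key : ∀ x : 𝒳,
      (∑ ω, if Z ω = 1 ∧ X ω = x then P ω * Y1 ω else 0) * pr P (fun ω => X ω = x)
      = (∑ ω, if X ω = x then P ω * Y1 ω else 0)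
          * pr P (fun ω => Z ω = 1 ∧ X ω = x) := by
    intro x
    have h1 := collapse (fun ω => Z ω = 1 ∧ X ω = x)
    have h2 := collapse (fun ω => X ω = x)
    have hswap : ∀ (c : Ω → Prop) (i1 i2 : ∀ ω, Decidable (c ω)),
        (∑ ω, @ite _ (c ω) (i1 ω) (P ω * Y1 ω) 0)
          = ∑ ω, @ite _ (c ω) (i2 ω) (P ω * Y1 ω) 0 :=
      fun c i1 i2 => Finset.sum_congr rfl fun ω _ => by congr!
    have hA : (∑ ω, if Z ω = 1 ∧ X ω = x then P ω * Y1 ω else 0)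
        = ∑ p ∈ (Finset.univ.image Y1) ×ˢ (Finset.univ.image Y0),
            p.1 * pr P (fun ω => Y1 ω = p.1 ∧ Y0 ω = p.2 ∧ Z ω = 1 ∧ X ω = x) := by
      rw [h1]; exact hswap _ _ _
    have hB : (∑ ω, if X ω = x then P ω * Y1 ω else 0)
        = ∑ p ∈ (Finset.univ.image Y1) ×ˢ (Finset.univ.image Y0),
            p.1 * pr P (fun ω => Y1 ω = p.1 ∧ Y0 ω = p.2 ∧ X ω = x) := by
      rw [h2]
    rw [hA, hB, Finset.sum_mul, Finset.sum_mul]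
    refine Finset.sum_congr rfl fun p _ => ?_
    rw [mul_assoc, mul_assoc, ignorability x 1 p.1 p.2]
  have decomp : ∀ f : Ω → ℝ,
      ∑ ω, f ω = ∑ x : 𝒳, ∑ ω, if X ω = x then f ω else 0 := by
    intro f
    rw [Finset.sum_comm]
    refine Finset.sum_congr rfl fun ω _ => ?_
    simp
  unfold expec
  rw [decomp (fun ω => P ω * (Z ω * Y ω / e (X ω))), decomp (fun ω => P ω * Y1 ω)]
  refine Finset.sum_congr rfl fun x _ => ?_
  have hsummand : ∀ ω, (if X ω = x then P ω * (Z ω * Y ω / e (X ω)) else 0)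
      = (if Z ω = 1 ∧ X ω = x then P ω * Y1 ω else 0) / e x := by
    intro ω
    by_cases hx : X ω = x
    · subst hx
      rcases hZ ω with h0 | h1
      · simp [h0]
      · have hy : Y ω = Y1 ω := by rw [consistency, h1]; ring
        rw [hy, h1, if_pos rfl, if_pos ⟨rfl, rfl⟩]
        ring
    · simp [hx]
  simp_rw [hsummand]
  rw [← Finset.sum_div]
  by_cases hpx : pr P (fun ω => X ω = x) = 0
  · have hzero : ∀ ω, X ω = x → P ω = 0 := by
      intro ω hω
      have hnn : ∀ ω' ∈ Finset.univ, 0 ≤ (if X ω' = x then P ω' else 0) := by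
        intro ω' _; split <;> simp [hP _]
      have h := (Finset.sum_eq_zero_iff_of_nonneg hnn).1 hpx ω (Finset.mem_univ ω)
      simpa [hω] using h
    have h1 : (∑ ω, if Z ω = 1 ∧ X ω = x then P ω * Y1 ω else 0) = 0 := by
      apply Finset.sum_eq_zero; intro ω _
      split
      · rename_i h; rw [hzero ω h.2]; ring
      · rfl
    have h2 : (∑ ω, if X ω = x then P ω * Y1 ω else 0) = 0 := by
      apply Finset.sum_eq_zero; intro ω _
      split
      · rename_i h; rw [hzero ω h]; ring
      · rfl
    rw [h1, h2, zero_div]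
  · have hpos : 0 < pr P (fun ω => X ω = x) := by
      have hge : 0 ≤ pr P (fun ω => X ω = x) :=
        Finset.sum_nonneg fun ω _ => by split <;> simp [hP _]
      exact lt_of_le_of_ne hge (Ne.symm hpx)
    have hepos : 0 < e x := overlap x hpos
    have hz1 : pr P (fun ω => Z ω = 1 ∧ X ω = x)
        = e x * pr P (fun ω => X ω = x) := by
      rw [he x]; field_simp [hpx]
    have hk := key x
    rw [hz1] at hk
    have hA : (∑ ω, if Z ω = 1 ∧ X ω = x then P ω * Y1 ω else 0)
        = (∑ ω, if X ω = x then P ω * Y1 ω else 0) * e x := by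
      apply mul_right_cancel₀ hpx
      rw [hk]; ring
    rw [hA, mul_div_assoc, div_self (ne_of_gt hepos), mul_one]
end

section
/- Under overlap and ignorability, E[ (1−Z)·Y / (1−e(X)) ] = E[Y(0)]. -/
open scoped Classical
open Finset

lemma triple_comm {Ω α β : Type*} [Fintype Ω] (s : Finset α) (t : Finset β)
    (g : α → β → Ω → ℝ) :
    (∑ a ∈ s, ∑ b ∈ t, ∑ ω, g a b ω) = ∑ ω, ∑ a ∈ s, ∑ b ∈ t, g a b ω := by
  calc (∑ a ∈ s, ∑ b ∈ t, ∑ ω, g a b ω) = ∑ a ∈ s, ∑ ω, ∑ b ∈ t, g a b ω :=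
        Finset.sum_congr rfl fun a _ => Finset.sum_comm
    _ = _ := Finset.sum_comm

lemma slice_sum {Ω : Type*} [Fintype Ω] (P : Ω → ℝ) (Y1 Y0 : Ω → ℝ) (A : Ω → Prop) :
    (∑ ω, if A ω then P ω * Y0 ω else 0)
      = ∑ y1 ∈ Finset.image Y1 Finset.univ, ∑ y0 ∈ Finset.image Y0 Finset.univ,
          y0 * pr P (fun ω => Y1 ω = y1 ∧ Y0 ω = y0 ∧ A ω) := by
  unfold pr
  simp only [Finset.mul_sum, mul_ite, mul_zero]
  rw [triple_comm]
  refine Finset.sum_congr rfl fun ω _ => ?_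
  simp only [ite_and, Finset.sum_ite_irrel, Finset.sum_const_zero]
  rw [Finset.sum_ite_eq (Finset.image Y1 Finset.univ) (Y1 ω)]
  simp only [Finset.mem_image_of_mem Y1 (Finset.mem_univ ω), if_true]
  rw [Finset.sum_ite_eq (Finset.image Y0 Finset.univ) (Y0 ω)]
  simp [Finset.mem_image_of_mem Y0 (Finset.mem_univ ω), mul_comm]

lemma fiber_sum {Ω 𝒳 : Type*} [Fintype Ω] [Fintype 𝒳] (X : Ω → 𝒳) (f : Ω → ℝ) :
    (∑ ω, f ω) = ∑ x, ∑ ω, if X ω = x then f ω else 0 := by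
  rw [Finset.sum_comm]
  refine Finset.sum_congr rfl fun ω _ => ?_
  rw [Finset.sum_ite_eq Finset.univ (X ω)]
  simp

/-- Under overlap and ignorability, E[(1−Z)·Y/(1−e(X))] = E[Y(0)]. -/
theorem ipw_identity_control {Ω 𝒳 : Type*} [Fintype Ω] [Fintype 𝒳]
    (P : Ω → ℝ) (hP : ∀ ω, 0 ≤ P ω) (hP1 : ∑ ω, P ω = 1)
    (X : Ω → 𝒳) (Z : Ω → ℝ) (Y1 Y0 Y : Ω → ℝ)
    (hZ : ∀ ω, Z ω = 0 ∨ Z ω = 1)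
    (consistency : ∀ ω, Y ω = Z ω * Y1 ω + (1 - Z ω) * Y0 ω)
    (e : 𝒳 → ℝ)
    (he : ∀ x, e x = pr P (fun ω => Z ω = 1 ∧ X ω = x) / pr P (fun ω => X ω = x))
    (overlap : ∀ x : 𝒳, 0 < pr P (fun ω => X ω = x) → e x < 1)
    (ignorability : ∀ (x : 𝒳) (z y1 y0 : ℝ),
      pr P (fun ω => Y1 ω = y1 ∧ Y0 ω = y0 ∧ Z ω = z ∧ X ω = x) * pr P (fun ω => X ω = x)
        = pr P (fun ω => Y1 ω = y1 ∧ Y0 ω = y0 ∧ X ω = x)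
            * pr P (fun ω => Z ω = z ∧ X ω = x)) :
    expec P (fun ω => (1 - Z ω) * Y ω / (1 - e (X ω))) = expec P Y0 := by
  unfold expec
  have hYeq : ∀ ω, (1 - Z ω) * Y ω = (1 - Z ω) * Y0 ω := by
    intro ω
    rcases hZ ω with h | h <;> rw [consistency ω, h] <;> ring
  -- splitting pr(X=x) into Z=0 and Z=1 parts
  have hsplit : ∀ x, pr P (fun ω => Z ω = 0 ∧ X ω = x) + pr P (fun ω => Z ω = 1 ∧ X ω = x)
      = pr P (fun ω => X ω = x) := by
    intro x
    unfold pr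
    rw [← Finset.sum_add_distrib]
    refine Finset.sum_congr rfl fun ω _ => ?_
    rcases hZ ω with h | h <;> by_cases hx : X ω = x <;> simp [h, hx]
  have key : ∀ x : 𝒳,
      (∑ ω, if X ω = x then P ω * ((1 - Z ω) * Y0 ω / (1 - e x)) else 0)
        = ∑ ω, if X ω = x then P ω * Y0 ω else 0 := by
    intro x
    rcases eq_or_lt_of_le (Finset.sum_nonneg (fun ω _ => by
        by_cases hx : X ω = x <;> simp [pr, hx, hP ω]) :
        (0:ℝ) ≤ pr P (fun ω => X ω = x)) with hpr | hpr
    · -- degenerate stratum: all P ω = 0 on the fiber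
      have hz : ∀ ω, X ω = x → P ω = 0 := by
        intro ω hx
        have := (Finset.sum_eq_zero_iff_of_nonneg (fun ω _ => by
          by_cases hx' : X ω = x <;> simp [hx', hP ω])).mp hpr.symm ω (Finset.mem_univ ω)
        simpa [hx] using this
      refine Finset.sum_congr rfl fun ω _ => ?_
      by_cases hx : X ω = x <;> simp [hx, hz ω]
    · -- nondegenerate stratum
      have hprne : pr P (fun ω => X ω = x) ≠ 0 := ne_of_gt hpr
      have hc : (0:ℝ) < 1 - e x := by linarith [overlap x hpr]
      have hcne : (1 - e x) ≠ 0 := ne_of_gt hc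
      have he1 : pr P (fun ω => Z ω = 1 ∧ X ω = x) = e x * pr P (fun ω => X ω = x) := by
        have := he x
        field_simp at this
        linarith [this]
      have he0 : pr P (fun ω => Z ω = 0 ∧ X ω = x)
          = (1 - e x) * pr P (fun ω => X ω = x) := by
        have := hsplit x
        rw [he1] at this
        linarith [this]
      have hig : ∀ y1 y0 : ℝ,
          pr P (fun ω => Y1 ω = y1 ∧ Y0 ω = y0 ∧ Z ω = 0 ∧ X ω = x)
            = (1 - e x) * pr P (fun ω => Y1 ω = y1 ∧ Y0 ω = y0 ∧ X ω = x) := by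
        intro y1 y0
        have h := ignorability x 0 y1 y0
        rw [he0] at h
        apply mul_right_cancel₀ hprne
        rw [h]; ring
      calc (∑ ω, if X ω = x then P ω * ((1 - Z ω) * Y0 ω / (1 - e x)) else 0)
          = (1 - e x)⁻¹ * ∑ ω, if Z ω = 0 ∧ X ω = x then P ω * Y0 ω else 0 := by
            rw [Finset.mul_sum]
            refine Finset.sum_congr rfl fun ω _ => ?_
            rcases hZ ω with h | h <;> by_cases hx : X ω = x <;>
              simp [h, hx] <;> field_simp <;> ring
        _ = (1 - e x)⁻¹ * ∑ y1 ∈ Finset.image Y1 Finset.univ,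
              ∑ y0 ∈ Finset.image Y0 Finset.univ,
              y0 * pr P (fun ω => Y1 ω = y1 ∧ Y0 ω = y0 ∧ Z ω = 0 ∧ X ω = x) :=
 by
            congr 1
            convert slice_sum P Y1 Y0 (fun ω => Z ω = 0 ∧ X ω = x) using 2 with ω
            by_cases h : Z ω = 0 ∧ X ω = x <;> simp [h]
        _ = ∑ y1 ∈ Finset.image Y1 Finset.univ, ∑ y0 ∈ Finset.image Y0 Finset.univ,
              y0 * pr P (fun ω => Y1 ω = y1 ∧ Y0 ω = y0 ∧ X ω = x) := by
            rw [inv_mul_eq_iff_eq_mul₀ hcne, Finset.mul_sum]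
            refine Finset.sum_congr rfl fun y1 _ => ?_
            rw [Finset.mul_sum]
            refine Finset.sum_congr rfl fun y0 _ => ?_
            rw [hig y1 y0]; ring
        _ = ∑ ω, if X ω = x then P ω * Y0 ω else 0 :=
            (slice_sum P Y1 Y0 (fun ω => X ω = x)).symm
  calc (∑ ω, P ω * ((1 - Z ω) * Y ω / (1 - e (X ω))))
      = ∑ x, ∑ ω, if X ω = x then P ω * ((1 - Z ω) * Y0 ω / (1 - e x)) else 0 := by
        rw [fiber_sum X]
        refine Finset.sum_congr rfl fun x _ => Finset.sum_congr rfl fun ω _ => ?_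
        by_cases hx : X ω = x
        · subst hx; simp [hYeq ω]
        · simp [hx]
    _ = ∑ x, ∑ ω, if X ω = x then P ω * Y0 ω else 0 :=
        Finset.sum_congr rfl fun x _ => key x
    _ = ∑ ω, P ω * Y0 ω := (fiber_sum X _).symm
end

section
/- Unbiasedness of the AIPW correction term: under overlap (e(X) > 0) and ignorability, for any outcome model μ₁ : 𝒳 → ℝ, E[ Z·(Y − μ₁(X)) / e(X) ] = E[Y(1)] − E[μ₁(X)]. Consequently the AIPW functional E[μ₁(X)] + E[ Z·(Y − μ₁(X)) / e(X) ] equals E[Y(1)] regardless of μ₁. -/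
open scoped Classical
open Finset

lemma aipw_key {Ω : Type*} [Fintype Ω] (P : Ω → ℝ) (Y1 Y0 : Ω → ℝ) (A : Ω → Prop) (g : ℝ → ℝ) :
    ∑ y1 ∈ univ.image Y1, ∑ y0 ∈ univ.image Y0,
      g y1 * pr P (fun ω => Y1 ω = y1 ∧ Y0 ω = y0 ∧ A ω)
    = ∑ ω, if A ω then g (Y1 ω) * P ω else 0 := by
  unfold pr
  simp only [Finset.mul_sum]
  refine ((Finset.sum_congr rfl fun y1 _ => Finset.sum_comm).trans Finset.sum_comm).trans
    (Finset.sum_congr rfl fun ω _ => ?_)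
  simp only [mul_ite, mul_zero, ite_and]
  rw [Finset.sum_eq_single (Y1 ω)]
  · simp only [if_pos rfl]
    rw [Finset.sum_eq_single (Y0 ω)]
    · simp
    · intro b _ hb
      simp [show ¬ Y0 ω = b from fun h => hb h.symm]
    · intro h; exact absurd (Finset.mem_image_of_mem Y0 (Finset.mem_univ ω)) h
  · intro b _ hb
    simp only [if_neg (show ¬ Y1 ω = b from fun h => hb h.symm), Finset.sum_const_zero]
  · intro h; exact absurd (Finset.mem_image_of_mem Y1 (Finset.mem_univ ω)) h

lemma pr_nonneg {Ω : Type*} [Fintype Ω] (P : Ω → ℝ) (hP : ∀ ω, 0 ≤ P ω) (A : Ω → Prop) :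
    0 ≤ pr P A :=
  Finset.sum_nonneg fun ω _ => by by_cases h : A ω <;> simp [h, hP ω]

/-- The AIPW correction term is unbiased:
E[Z(Y − μ₁(X))/e(X)] = E[Y(1)] − E[μ₁(X)], hence the AIPW functional equals E[Y(1)]
for any outcome model μ₁. -/
theorem aipw_correction_unbiased {Ω 𝒳 : Type*} [Fintype Ω] [Fintype 𝒳]
    (P : Ω → ℝ) (hP : ∀ ω, 0 ≤ P ω) (hP1 : ∑ ω, P ω = 1)
    (X : Ω → 𝒳) (Z : Ω → ℝ) (Y1 Y0 Y : Ω → ℝ)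
    (hZ : ∀ ω, Z ω = 0 ∨ Z ω = 1)
    (consistency : ∀ ω, Y ω = Z ω * Y1 ω + (1 - Z ω) * Y0 ω)
    (e : 𝒳 → ℝ)
    (he : ∀ x, e x = pr P (fun ω => Z ω = 1 ∧ X ω = x) / pr P (fun ω => X ω = x))
    (overlap : ∀ x : 𝒳, 0 < pr P (fun ω => X ω = x) → 0 < e x)
    (ignorability : ∀ (x : 𝒳) (z y1 y0 : ℝ),
      pr P (fun ω => Y1 ω = y1 ∧ Y0 ω = y0 ∧ Z ω = z ∧ X ω = x) * pr P (fun ω => X ω = x)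
        = pr P (fun ω => Y1 ω = y1 ∧ Y0 ω = y0 ∧ X ω = x)
            * pr P (fun ω => Z ω = z ∧ X ω = x))
    (μ1 : 𝒳 → ℝ) :
    expec P (fun ω => Z ω * (Y ω - μ1 (X ω)) / e (X ω))
        = expec P Y1 - expec P (fun ω => μ1 (X ω)) ∧
    expec P (fun ω => μ1 (X ω)) + expec P (fun ω => Z ω * (Y ω - μ1 (X ω)) / e (X ω))
        = expec P Y1 := by
  have main : expec P (fun ω => Z ω * (Y ω - μ1 (X ω)) / e (X ω))
      = expec P Y1 - expec P (fun ω => μ1 (X ω)) := by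
    set A : 𝒳 → ℝ := fun x => ∑ ω, if X ω = x then P ω * (Z ω * (Y1 ω - μ1 x)) else 0 with hAdef
    set B : 𝒳 → ℝ := fun x => ∑ ω, if X ω = x then P ω * (Y1 ω - μ1 x) else 0 with hBdef
    -- fiber decomposition
    have fib : ∀ F : Ω → ℝ, (∑ x, ∑ ω, if X ω = x then F ω else 0) = ∑ ω, F ω := by
      intro F
      rw [Finset.sum_comm]
      refine Finset.sum_congr rfl fun ω _ => ?_
      rw [Finset.sum_ite_eq]
      simp
    -- rewrite A and B in aipw_key's shape
    have hA2 : ∀ x, A x = ∑ y1 ∈ univ.image Y1, ∑ y0 ∈ univ.image Y0,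
        (y1 - μ1 x) * pr P (fun ω => Y1 ω = y1 ∧ Y0 ω = y0 ∧ Z ω = 1 ∧ X ω = x) := by
      intro x
      rw [aipw_key P Y1 Y0 (fun ω => Z ω = 1 ∧ X ω = x) (fun y1 => y1 - μ1 x)]
      refine Finset.sum_congr rfl fun ω _ => ?_
      by_cases hx : X ω = x <;> rcases hZ ω with h | h <;> simp [hx, h] <;> ring
    have hB2 : ∀ x, B x = ∑ y1 ∈ univ.image Y1, ∑ y0 ∈ univ.image Y0,
        (y1 - μ1 x) * pr P (fun ω => Y1 ω = y1 ∧ Y0 ω = y0 ∧ X ω = x) := by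
      intro x
      rw [aipw_key P Y1 Y0 (fun ω => X ω = x) (fun y1 => y1 - μ1 x)]
      refine Finset.sum_congr rfl fun ω _ => ?_
      by_cases hx : X ω = x <;> simp [hx] <;> ring
    -- claim 1: from ignorability
    have claim1 : ∀ x, A x * pr P (fun ω => X ω = x)
        = B x * pr P (fun ω => Z ω = 1 ∧ X ω = x) := by
      intro x
      rw [hA2 x, hB2 x]
      simp only [Finset.sum_mul]
      refine Finset.sum_congr rfl fun y1 _ => Finset.sum_congr rfl fun y0 _ => ?_
      rw [mul_assoc, mul_assoc, ignorability x 1 y1 y0]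
    -- claim 2: pr(Z=1 ∧ X=x) = e x * pr(X=x)
    have prle : ∀ x, pr P (fun ω => Z ω = 1 ∧ X ω = x) ≤ pr P (fun ω => X ω = x) := by
      intro x
      refine Finset.sum_le_sum fun ω _ => ?_
      by_cases h1 : Z ω = 1 ∧ X ω = x
      · simp [h1, h1.2]
      · simp only [if_neg h1]
        by_cases h2 : X ω = x <;> simp [h2, hP ω]
    have claim2 : ∀ x, pr P (fun ω => Z ω = 1 ∧ X ω = x) = e x * pr P (fun ω => X ω = x) := by
      intro x
      rw [he x]
      by_cases hx : pr P (fun ω => X ω = x) = 0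
      · rw [hx, mul_zero]
        exact le_antisymm ((prle x).trans_eq hx)
          (pr_nonneg P hP (fun ω => Z ω = 1 ∧ X ω = x))
      · rw [div_mul_cancel₀ _ hx]
    -- claim 3: A x / e x = B x
    have claim3 : ∀ x, A x / e x = B x := by
      intro x
      rcases eq_or_lt_of_le (pr_nonneg P hP (fun ω => X ω = x)) with h | h
      · -- degenerate fiber: all P ω = 0 on it
        have hz : ∀ ω, X ω = x → P ω = 0 := by
          intro ω hω
          by_contra hne
          have hpos : 0 < P ω := (hP ω).lt_of_ne (Ne.symm hne)
          have hle : P ω ≤ pr P (fun ω => X ω = x) := by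
            have := Finset.single_le_sum
              (f := fun ω' => if X ω' = x then P ω' else 0)
              (fun i _ => by by_cases hi : X i = x <;> simp [hi, hP i])
              (Finset.mem_univ ω)
            simpa [pr, hω] using this
          have hlt : 0 < pr P (fun ω => X ω = x) := lt_of_lt_of_le hpos hle
          linarith
        have hA0 : A x = 0 := Finset.sum_eq_zero fun ω _ => by
          by_cases hω : X ω = x <;> simp [hω, hz ω]
        have hB0 : B x = 0 := Finset.sum_eq_zero fun ω _ => by
          by_cases hω : X ω = x <;> simp [hω, hz ω]
        rw [hA0, hB0, zero_div]
      · have hex : 0 < e x := overlap x h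
        have h1 := claim1 x
        rw [claim2 x, ← mul_assoc] at h1
        have h2 : A x = B x * e x := mul_right_cancel₀ (ne_of_gt h) h1
        rw [h2, mul_div_cancel_right₀ _ (ne_of_gt hex)]
    -- assemble
    have L1 : expec P (fun ω => Z ω * (Y ω - μ1 (X ω)) / e (X ω)) = ∑ x, A x / e x := by
      unfold expec
      rw [← fib (fun ω => P ω * (Z ω * (Y ω - μ1 (X ω)) / e (X ω)))]
      refine Finset.sum_congr rfl fun x _ => ?_
      rw [hAdef]
      simp only [Finset.sum_div]
      refine Finset.sum_congr rfl fun ω _ => ?_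
      by_cases hω : X ω = x
      · rw [if_pos hω, if_pos hω, hω, consistency ω]
        rcases hZ ω with h | h <;> rw [h] <;> ring
      · rw [if_neg hω, if_neg hω, zero_div]
    have L2 : (∑ x, B x) = expec P Y1 - expec P (fun ω => μ1 (X ω)) := by
      unfold expec
      rw [← Finset.sum_sub_distrib,
        ← fib (fun ω => P ω * Y1 ω - P ω * μ1 (X ω))]
      refine Finset.sum_congr rfl fun x _ => Finset.sum_congr rfl fun ω _ => ?_
      by_cases hω : X ω = x
      · rw [if_pos hω, if_pos hω, hω]; ring
      · rw [if_neg hω, if_neg hω]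
    rw [L1, Finset.sum_congr rfl fun x _ => claim3 x, L2]
  exact ⟨main, by linarith [main]⟩
end
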